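/- Let (X_n) be an increasing sequence of nonempty finite sets with union X, let ~ be an equivalence relation on X, and suppose limsup_{n→∞} (number of ~-classes meeting X_n)^{1/n} ≤ α < β ≤ liminf_{n→∞} (#X_n)^{1/n} for some reals 1 ≤ α < β. Let Y ⊆ X be a set of elements whose ~-equivalence class is a singleton (i.e. elements detected by any invariant constant on ~-classes). Then Y has asymptotic density zero in X: lim_{n→∞} #(Y ∩ X_n)/#X_n = 0. -/

import Mathlib

open Filter

/-- With `(X_n)` increasing nonempty finite sets with union `X`, `~` an
equivalence relation with `limsup (#classes meeting X_n)^{1/n} ≤ α < β ≤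
liminf (#X_n)^{1/n}` for reals `1 ≤ α < β`, any set `Y ⊆ X` of elements whose
`~`-class is a singleton has asymptotic density zero in `X`. -/
theorem stmt_19 {E : Type*} (X : ℕ → Set E) (hfin : ∀ n, (X n).Finite)
    (hne : ∀ n, (X n).Nonempty) (hmono : ∀ n, X n ⊆ X (n + 1))
    (s : Setoid E) (α β : ℝ) (hα : 1 ≤ α) (hαβ : α < β)
    (hcl : limsup
      (fun n : ℕ => (((((Quotient.mk s) '' X n).ncard : ℝ) ^ (1 / (n : ℝ)) : ℝ) : EReal))
      atTop ≤ (α : EReal))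
    (hX : (β : EReal)
      ≤ liminf (fun n : ℕ => ((((X n).ncard : ℝ) ^ (1 / (n : ℝ)) : ℝ) : EReal)) atTop)
    (Y : Set E) (hY : Y ⊆ ⋃ n, X n)
    (hsing : ∀ x ∈ Y, ∀ x' ∈ ⋃ n, X n, s.r x x' → x' = x) :
    Tendsto (fun n : ℕ => ((Y ∩ X n).ncard : ℝ) / ((X n).ncard : ℝ)) atTop (nhds 0) := by
  set c : ℕ → ℝ := fun n => (((Quotient.mk s) '' X n).ncard : ℝ) with hc
  set x : ℕ → ℝ := fun n => ((X n).ncard : ℝ) with hx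
  have hc0 : ∀ n, 0 ≤ c n := fun n => Nat.cast_nonneg _
  -- key counting inequality
  have hkey : ∀ n, ((Y ∩ X n).ncard : ℝ) ≤ c n := by
    intro n
    have hinj : Set.InjOn (Quotient.mk s) (Y ∩ X n) := by
      intro a ha b hb hab
      have hr : s.r a b := Quotient.eq.mp hab
      have : b = a := hsing a ha.1 b (Set.mem_iUnion.mpr ⟨n, hb.2⟩) hr
      exact this.symm
    have h1 : (Y ∩ X n).ncard = ((Quotient.mk s) '' (Y ∩ X n)).ncard :=
      (Set.ncard_image_of_injOn hinj).symm
    have h2 : ((Quotient.mk s) '' (Y ∩ X n)).ncard ≤ ((Quotient.mk s) '' X n).ncard :=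
      Set.ncard_le_ncard (Set.image_mono Set.inter_subset_right)
        ((hfin n).image _)
    exact_mod_cast h1 ▸ Nat.cast_le.mpr h2
  set γ : ℝ := (2 * α + β) / 3 with hγ
  set δ : ℝ := (α + 2 * β) / 3 with hδ
  have hαγ : α < γ := by rw [hγ]; linarith
  have hγδ : γ < δ := by rw [hγ, hδ]; linarith
  have hδβ : δ < β := by rw [hδ]; linarith
  have hγ0 : 0 < γ := lt_of_lt_of_le (by linarith) (le_of_lt hαγ)
  have hδ0 : 0 < δ := hγ0.trans hγδ
  -- eventually c n ≤ γ ^ n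
  have hev1 : ∀ᶠ n in atTop, c n ≤ γ ^ n := by
    have hlt : limsup
        (fun n : ℕ => (((c n) ^ (1 / (n : ℝ)) : ℝ) : EReal)) atTop < (γ : EReal) :=
      lt_of_le_of_lt hcl (EReal.coe_lt_coe_iff.mpr hαγ)
    have hev := Filter.eventually_lt_of_limsup_lt hlt
    filter_upwards [hev, Filter.eventually_ge_atTop 1] with n hn hn1
    have hn' : (c n) ^ (1 / (n : ℝ)) < γ := EReal.coe_lt_coe_iff.mp hn
    have hnne : (n : ℝ) ≠ 0 := Nat.cast_ne_zero.mpr (by omega)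
    have h2 : ((c n) ^ (1 / (n : ℝ))) ^ n ≤ γ ^ n :=
      pow_le_pow_left₀ (Real.rpow_nonneg (hc0 n) _) hn'.le n
    calc c n = ((c n) ^ (1 / (n : ℝ))) ^ n := by
          rw [← Real.rpow_natCast ((c n) ^ (1 / (n : ℝ))) n, ← Real.rpow_mul (hc0 n),
            one_div_mul_cancel hnne, Real.rpow_one]
      _ ≤ γ ^ n := h2
  -- eventually δ ^ n ≤ x n
  have hev2 : ∀ᶠ n in atTop, δ ^ n ≤ x n := by
    have hlt : (δ : EReal) < liminf
        (fun n : ℕ => (((x n) ^ (1 / (n : ℝ)) : ℝ) : EReal)) atTop :=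
      lt_of_lt_of_le (EReal.coe_lt_coe_iff.mpr hδβ) hX
    have hev := Filter.eventually_lt_of_lt_liminf hlt
    filter_upwards [hev, Filter.eventually_ge_atTop 1] with n hn hn1
    have hn' : δ < (x n) ^ (1 / (n : ℝ)) := EReal.coe_lt_coe_iff.mp hn
    have hnne : (n : ℝ) ≠ 0 := Nat.cast_ne_zero.mpr (by omega)
    have hx0 : 0 ≤ x n := Nat.cast_nonneg _
    have h2 : δ ^ n ≤ ((x n) ^ (1 / (n : ℝ))) ^ n :=
      pow_le_pow_left₀ hδ0.le hn'.le n
    calc δ ^ n ≤ ((x n) ^ (1 / (n : ℝ))) ^ n := h2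
      _ = x n := by
          rw [← Real.rpow_natCast ((x n) ^ (1 / (n : ℝ))) n, ← Real.rpow_mul hx0,
            one_div_mul_cancel hnne, Real.rpow_one]
  -- squeeze
  have hbound : ∀ᶠ n in atTop,
      ((Y ∩ X n).ncard : ℝ) / x n ≤ (γ / δ) ^ n := by
    filter_upwards [hev1, hev2] with n h1 h2
    have hδn : 0 < δ ^ n := pow_pos hδ0 n
    have hxn : 0 < x n := lt_of_lt_of_le hδn h2
    rw [div_pow]
    calc ((Y ∩ X n).ncard : ℝ) / x n ≤ γ ^ n / x n := by
          gcongr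
          exact (hkey n).trans h1
      _ ≤ γ ^ n / δ ^ n := by
          gcongr γ ^ n / ?_
  have hnonneg : ∀ᶠ n in atTop, 0 ≤ ((Y ∩ X n).ncard : ℝ) / x n := by
    filter_upwards with n
    exact div_nonneg (Nat.cast_nonneg _) (Nat.cast_nonneg _)
  have hratio : (0:ℝ) ≤ γ / δ ∧ γ / δ < 1 := by
    constructor
    · exact div_nonneg hγ0.le hδ0.le
    · rw [div_lt_one hδ0]; exact hγδ
  exact squeeze_zero' hnonneg hbound
    (tendsto_pow_atTop_nhds_zero_of_lt_one hratio.1 hratio.2)
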